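/- Local character of linear disjointness: let B be an infinite field inside a larger field, and let a be a finite tuple of elements of the larger field. Then there exists a countable subfield B₀ ⊆ B such that the field B₀(a) is linearly disjoint from B over B₀. -/

import Mathlib

/-- `A` (a subset of `K`) is linearly disjoint from the subfield `B` over the subfield `C`:
every tuple of elements of `A` that is linearly independent over `C` is linearly
independent over `B`. -/
def LinDisjS (K : Type*) [Field K] (A : Set K) (B C : Subfield K) : Prop :=
  ∀ (n : ℕ) (a : Fin n → K), (∀ i, a i ∈ A) →
    LinearIndependent C a → LinearIndependent B a

/-- Linear disjointness of the subfield `A` from `B` over `C`. -/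
def LinDisj (K : Type*) [Field K] (A B C : Subfield K) : Prop :=
  LinDisjS K (A : Set K) B C

open Subfield Set

section Aux

variable {K : Type*} [Field K]

private lemma countable_closure_aux {s : Set K} (hs : s.Countable) :
    (Subfield.closure s : Set K).Countable := by
  rw [← Set.countable_coe_iff] at *
  rw [← Cardinal.mk_le_aleph0_iff] at *
  exact (Subfield.cardinalMk_closure_le_max s).trans (max_le hs le_rfl)

private lemma countable_sup_aux {C D : Subfield K} (hC : (C : Set K).Countable)
    (hD : (D : Set K).Countable) : ((C ⊔ D : Subfield K) : Set K).Countable := by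
  rw [← Subfield.closure_eq C, ← Subfield.closure_eq D, ← Subfield.closure_union]
  exact countable_closure_aux (hC.union hD)

open Classical in
/-- chosen witness of a `B`-linear dependence of the tuple `c`. -/
private noncomputable def wit (B : Subfield K) (n : ℕ) (c : Fin n → K) : Fin n → K :=
  if h : ∃ g : Fin n → B, (∑ i, (g i : K) * c i = 0) ∧ ∃ i, g i ≠ 0 then
    fun i => (h.choose i : K)
  else 0

open Classical in
private lemma wit_mem (B : Subfield K) (n : ℕ) (c : Fin n → K) (i : Fin n) :
    wit B n c i ∈ B := by
  unfold wit
  split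
  · exact SetLike.coe_mem _
  · exact zero_mem B

open Classical in
private lemma wit_spec {B : Subfield K} {n : ℕ} {c : Fin n → K}
    (h : ¬ LinearIndependent B c) :
    (∑ i, wit B n c i * c i = 0) ∧ ∃ i, wit B n c i ≠ 0 := by
  rw [Fintype.linearIndependent_iff] at h
  push_neg at h
  obtain ⟨g, hg1, i0, hi0⟩ := h
  have hex : ∃ g : Fin n → B, (∑ i, (g i : K) * c i = 0) ∧ ∃ i, g i ≠ 0 :=
    ⟨g, by simpa [Subfield.smul_def, smul_eq_mul] using hg1, i0, hi0⟩
  unfold wit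
  rw [dif_pos hex]
  refine ⟨hex.choose_spec.1, ?_⟩
  obtain ⟨i, hi⟩ := hex.choose_spec.2
  exact ⟨i, by exact_mod_cast hi⟩

/-- the witness set used to enlarge `C`. -/
private def witSet (B A C : Subfield K) : Set K :=
  ⋃ n : ℕ, ⋃ c ∈ {c : Fin n → K | ∀ i, c i ∈ C ⊔ A}, Set.range (wit B n c)

private noncomputable def step (B A C : Subfield K) : Subfield K :=
  C ⊔ Subfield.closure (witSet B A C)

private lemma le_step (B A C : Subfield K) : C ≤ step B A C := le_sup_left

private lemma step_le (B A : Subfield K) {C : Subfield K} (hC : C ≤ B) : step B A C ≤ B := by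
  refine sup_le hC ((Subfield.closure_le).2 ?_)
  rintro x hx
  simp only [witSet, Set.mem_iUnion, Set.mem_range] at hx
  obtain ⟨n, c, -, i, rfl⟩ := hx
  exact wit_mem B n c i

private lemma step_countable (B A : Subfield K) {C : Subfield K}
    (hA : (A : Set K).Countable) (hC : (C : Set K).Countable) :
    ((step B A C : Subfield K) : Set K).Countable := by
  refine countable_sup_aux hC (countable_closure_aux ?_)
  refine Set.countable_iUnion fun n => ?_
  refine Set.Countable.biUnion ?_ fun c _ => (Set.finite_range _).countable
  exact Set.countable_pi fun i => countable_sup_aux hC hA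

end Aux

/-- Local character of linear disjointness. -/
theorem stmt4 (K : Type*) [Field K] (B : Subfield K) (hB : (B : Set K).Infinite)
    (m : ℕ) (a : Fin m → K) :
    ∃ B₀ : Subfield K, B₀ ≤ B ∧ Countable B₀ ∧
      LinDisj K (B₀ ⊔ Subfield.closure (Set.range a)) B B₀ := by
  classical
  set A : Subfield K := Subfield.closure (Set.range a) with hA
  have hAcount : (A : Set K).Countable :=
    countable_closure_aux (Set.finite_range a).countable
  set Bn : ℕ → Subfield K := fun n => (step B A)^[n] ⊥ with hBndef
  have hBn_succ : ∀ n, Bn (n + 1) = step B A (Bn n) := fun n =>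
    Function.iterate_succ_apply' _ _ _
  have hmono : Monotone Bn := monotone_nat_of_le_succ fun n => by
    rw [hBn_succ]; exact le_step _ _ _
  have hcount : ∀ n, ((Bn n : Subfield K) : Set K).Countable := by
    intro n
    induction n with
    | zero =>
        have : (Bn 0 : Subfield K) = Subfield.closure (∅ : Set K) := by
          simp [hBndef, Subfield.closure_empty]
        rw [this]
        exact countable_closure_aux Set.countable_empty
    | succ n ih => rw [hBn_succ]; exact step_countable B A hAcount ih
  have hle : ∀ n, Bn n ≤ B := by
    intro n
    induction n with
    | zero => exact bot_le
    | succ n ih => rw [hBn_succ]; exact step_le B A ih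
  have hsup_set : ((⨆ n, Bn n : Subfield K) : Set K) = ⋃ n, (Bn n : Set K) := by
    ext x
    simp [Subfield.mem_iSup_of_directed hmono.directed_le]
  refine ⟨⨆ n, Bn n, iSup_le hle, ?_, ?_⟩
  · exact Set.countable_coe_iff.mpr (hsup_set ▸ Set.countable_iUnion hcount)
  · intro n c hc hlin
    by_contra hdep
    have hmem : ∀ i, ∃ j, c i ∈ Bn j ⊔ A := by
      intro i
      have hx := hc i
      have h2 : (⨆ j, Bn j) ⊔ A = ⨆ j, (Bn j ⊔ A) := iSup_sup
      have hdir : Directed (· ≤ ·) fun j => Bn j ⊔ A :=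
        (Monotone.directed_le fun _ _ h => sup_le_sup_right (hmono h) A)
      have hx' : c i ∈ ⨆ j, (Bn j ⊔ A) := by rw [← h2]; exact hx
      rw [Subfield.mem_iSup_of_directed hdir] at hx'
      exact hx'
    choose k hk using hmem
    set N := Finset.univ.sup k with hN
    have hcN : ∀ i, c i ∈ Bn N ⊔ A := fun i =>
      SetLike.le_def.mp (sup_le_sup_right (hmono (Finset.le_sup (Finset.mem_univ i))) A) (hk i)
    have hw := wit_spec (B := B) (n := n) (c := c) hdep
    have hwmem : ∀ i, wit B n c i ∈ (⨆ j, Bn j) := by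
      intro i
      refine SetLike.le_def.mp (le_iSup Bn (N + 1)) ?_
      rw [hBn_succ]
      refine SetLike.le_def.mp (le_sup_right (a := Bn N)) (Subfield.subset_closure ?_)
      simp only [witSet, Set.mem_iUnion, Set.mem_range, Set.mem_setOf_eq]
      exact ⟨n, c, hcN, i, rfl⟩
    set g : Fin n → (⨆ j, Bn j : Subfield K) := fun i => ⟨wit B n c i, hwmem i⟩ with hg
    have hrel : ∑ i, g i • c i = 0 := by
      simpa [hg, Subfield.smul_def, smul_eq_mul] using hw.1
    obtain ⟨i, hi⟩ := hw.2
    have := Fintype.linearIndependent_iff.mp hlin g hrel i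
    exact hi (by simpa [hg, Subtype.ext_iff] using this)
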